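/- Let σ be a type and let R = MvPolynomial σ K be the polynomial algebra. Let B ⊆ R be the K-linear span of the monomials of even total degree and V ⊆ R the K-linear span of the monomials of odd total degree, so that R = B ⊕ V is a ℤ/2-graded K-algebra with even part B and odd part V. Then every element in the image of the multiplication-induced map μ : V ⊗_B V → B has vanishing constant coefficient; in particular, 1 is not in the image of μ and μ is not surjective. -/

import Mathlib

set_option synthInstance.maxHeartbeats 1000000
set_option maxHeartbeats 1000000


open scoped TensorProduct

/-- The `K`-linear span of the monomials of even total degree in `MvPolynomial σ K`
(the even part of the `ℤ/2`-grading by total degree). -/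
noncomputable def evenPart (σ K : Type) [Field K] : Submodule K (MvPolynomial σ K) :=
  Submodule.span K {p : MvPolynomial σ K |
    ∃ d : σ →₀ ℕ, Even (d.sum fun _ n => n) ∧ p = MvPolynomial.monomial d (1 : K)}

/-- The `K`-linear span of the monomials of odd total degree in `MvPolynomial σ K`
(the odd part of the `ℤ/2`-grading by total degree). -/
noncomputable def oddPart (σ K : Type) [Field K] : Submodule K (MvPolynomial σ K) :=
  Submodule.span K {p : MvPolynomial σ K |
    ∃ d : σ →₀ ℕ, Odd (d.sum fun _ n => n) ∧ p = MvPolynomial.monomial d (1 : K)}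

instance grTensorV_addCommGroup (K A : Type) [Field K] [Ring A] [Algebra K A]
    (V : Submodule K A) : AddCommGroup (TensorProduct K V V) :=
  TensorProduct.addCommGroup

/-- The relative tensor product `V ⊗_B V` of the odd part `V` with itself over the even
part `B`, realized as the quotient of `V ⊗_K V` by the `K`-span of the balancing relators
`(v·b) ⊗ v' - v ⊗ (b·v')` for `b ∈ B`. -/
noncomputable abbrev grTensorV (K A : Type) [Field K] [Ring A] [Algebra K A]
    (B V : Submodule K A) : Type :=
  (TensorProduct K V V) ⧸ (Submodule.span K {x : TensorProduct K V V |
    ∃ (v v' b : A) (hv : v ∈ V) (hv' : v' ∈ V) (_ : b ∈ B) (hvb : v * b ∈ V)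
      (hbv' : b * v' ∈ V),
      x = (⟨v * b, hvb⟩ : V) ⊗ₜ[K] (⟨v', hv'⟩ : V)
            - (⟨v, hv⟩ : V) ⊗ₜ[K] (⟨b * v', hbv'⟩ : V)})


section Aux

variable (σ K : Type) [Field K]

lemma oddPart_mul_oddPart_le : (oddPart σ K) * (oddPart σ K) ≤ evenPart σ K := by
  classical
  rw [oddPart, Submodule.span_mul_span]
  apply Submodule.span_le.2
  rintro _ ⟨p, ⟨d, hd, rfl⟩, q, ⟨e, he, rfl⟩, rfl⟩
  apply Submodule.subset_span
  refine ⟨d + e, ?_, ?_⟩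
  · rw [Finsupp.sum_add_index (by simp) (by intros; rfl)]
    exact Odd.add_odd hd he
  · simp [MvPolynomial.monomial_mul]

lemma mem_even_of_mul {v v' : MvPolynomial σ K} (hv : v ∈ oddPart σ K)
    (hv' : v' ∈ oddPart σ K) : v * v' ∈ evenPart σ K :=
  oddPart_mul_oddPart_le σ K (Submodule.mul_mem_mul hv hv')

lemma coeff_zero_of_odd {v : MvPolynomial σ K} (hv : v ∈ oddPart σ K) :
    MvPolynomial.coeff 0 v = 0 := by
  induction hv using Submodule.span_induction with
  | mem p hp =>
    obtain ⟨d, hd, rfl⟩ := hp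
    have hd0 : d ≠ 0 := by
      rintro rfl
      simp at hd
    classical
    simp [MvPolynomial.coeff_monomial, hd0]
  | zero => simp
  | add x y _ _ hx hy => simp [hx, hy]
  | smul a x _ hx => simp [hx]

noncomputable def mulBil :
    (oddPart σ K) →ₗ[K] (oddPart σ K) →ₗ[K] (evenPart σ K) :=
  LinearMap.mk₂ K
    (fun v v' => ⟨(v : MvPolynomial σ K) * v', mem_even_of_mul σ K v.2 v'.2⟩)
    (fun v w v' => by ext; simp [add_mul])
    (fun a v v' => by ext; simp [smul_mul_assoc])
    (fun v v' w' => by ext; simp [mul_add])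
    (fun a v v' => by ext; simp [mul_smul_comm])

noncomputable def mulLift :
    TensorProduct K (oddPart σ K) (oddPart σ K) →ₗ[K] (evenPart σ K) :=
  TensorProduct.lift (mulBil σ K)

lemma coeff_zero_mulLift (y : TensorProduct K (oddPart σ K) (oddPart σ K)) :
    MvPolynomial.coeff 0 ((mulLift σ K y : evenPart σ K) : MvPolynomial σ K) = 0 := by
  induction y using TensorProduct.induction_on with
  | zero => rw [map_zero]; simp
  | tmul v v' =>
    rw [mulLift, TensorProduct.lift.tmul, mulBil, LinearMap.mk₂_apply]
    show MvPolynomial.coeff 0 ((v : MvPolynomial σ K) * (v' : MvPolynomial σ K)) = 0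
    rw [← MvPolynomial.constantCoeff_eq, map_mul, MvPolynomial.constantCoeff_eq,
      coeff_zero_of_odd σ K v.2, zero_mul]
  | add x y hx hy =>
    rw [map_add, Submodule.coe_add, MvPolynomial.coeff_add, hx, hy, add_zero]

end Aux

/-- For the polynomial algebra `R = MvPolynomial σ K` with its
`ℤ/2`-grading `R = B ⊕ V` by even/odd total degree, every element in the image of the
multiplication-induced map `μ : V ⊗_B V → B` has vanishing constant coefficient; in
particular `1` is not in the image of `μ`, and `μ` is not surjective. -/
theorem stmt_13 (σ K : Type) [Field K] [CharZero K] :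
    ∃ μ : grTensorV K (MvPolynomial σ K) (evenPart σ K) (oddPart σ K) →ₗ[K] evenPart σ K,
      (∀ (v v' : MvPolynomial σ K) (hv : v ∈ oddPart σ K) (hv' : v' ∈ oddPart σ K)
          (h : v * v' ∈ evenPart σ K),
        μ (Submodule.Quotient.mk
            ((⟨v, hv⟩ : oddPart σ K) ⊗ₜ[K] (⟨v', hv'⟩ : oddPart σ K))) = ⟨v * v', h⟩) ∧
      (∀ x, MvPolynomial.coeff 0 ((μ x : evenPart σ K) : MvPolynomial σ K) = 0) ∧
      (∀ h1 : (1 : MvPolynomial σ K) ∈ evenPart σ K,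
        (⟨1, h1⟩ : evenPart σ K) ∉ Set.range μ) ∧
      ¬ Function.Surjective μ := by
  have hle : Submodule.span K {x : TensorProduct K (oddPart σ K) (oddPart σ K) |
      ∃ (v v' b : MvPolynomial σ K) (hv : v ∈ oddPart σ K) (hv' : v' ∈ oddPart σ K)
        (_ : b ∈ evenPart σ K) (hvb : v * b ∈ oddPart σ K) (hbv' : b * v' ∈ oddPart σ K),
        x = (⟨v * b, hvb⟩ : oddPart σ K) ⊗ₜ[K] (⟨v', hv'⟩ : oddPart σ K)
              - (⟨v, hv⟩ : oddPart σ K) ⊗ₜ[K] (⟨b * v', hbv'⟩ : oddPart σ K)} ≤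
      LinearMap.ker (mulLift σ K) := by
    apply Submodule.span_le.2
    rintro _ ⟨v, v', b, hv, hv', hb, hvb, hbv', rfl⟩
    simp only [SetLike.mem_coe, LinearMap.mem_ker, map_sub]
    rw [mulLift, TensorProduct.lift.tmul, TensorProduct.lift.tmul]
    apply sub_eq_zero_of_eq
    ext
    simp [mulBil, mul_assoc]
  refine ⟨Submodule.liftQ _ (mulLift σ K) hle, ?_, ?_, ?_, ?_⟩
  · intro v v' hv hv' h
    rw [Submodule.liftQ_apply, mulLift, TensorProduct.lift.tmul]
    rfl
  · intro x
    obtain ⟨y, rfl⟩ := Submodule.Quotient.mk_surjective _ x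
    rw [Submodule.liftQ_apply]
    exact coeff_zero_mulLift σ K y
  · rintro h1 ⟨x, hx⟩
    obtain ⟨y, rfl⟩ := Submodule.Quotient.mk_surjective _ x
    rw [Submodule.liftQ_apply] at hx
    have h0 := coeff_zero_mulLift σ K y
    rw [hx] at h0
    simp at h0
  · intro hsurj
    have h1 : (1 : MvPolynomial σ K) ∈ evenPart σ K :=
      Submodule.subset_span ⟨0, by simp, by simp⟩
    obtain ⟨x, hx⟩ := hsurj ⟨1, h1⟩
    obtain ⟨y, rfl⟩ := Submodule.Quotient.mk_surjective _ x
    rw [Submodule.liftQ_apply] at hx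
    have h0 := coeff_zero_mulLift σ K y
    rw [hx] at h0
    simp at h0
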